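/- arXiv:1806.07040 — 2 statements merged into one kernel-verified Lean document; each statement's English description precedes it below -/
import Mathlib

section
/- If L is a list-assignment for a finite graph G such that deg_G(v) + 1 ≤ |L(v)|·(d+1) for every vertex v, then G has an L-colouring in which every vertex has at most d neighbours of its own colour (i.e., an L-colouring with defect d). -/
/-- The monochromatic subgraph of `G` under colouring `φ`. -/
def SimpleGraph.monoSub {V : Type*} (G : SimpleGraph V) (φ : V → ℕ) : SimpleGraph V where
  Adj u v := G.Adj u v ∧ φ u = φ v
  symm := ⟨fun u v h => ⟨G.adj_symm h.1, h.2.symm⟩⟩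
  loopless := ⟨fun v h => G.irrefl h.1⟩

/-- The colouring `φ` has defect at most `d`: every vertex has at most `d`
neighbours of its own colour. -/
def SimpleGraph.DefectLe {V : Type*} (G : SimpleGraph V) (φ : V → ℕ) (d : ℕ) : Prop :=
  ∀ v : V, {w : V | G.Adj v w ∧ φ w = φ v}.ncard ≤ d

/-- The colouring `φ` has clustering at most `c`: every connected component of
the monochromatic subgraph has at most `c` vertices. -/
def SimpleGraph.ClusterLe {V : Type*} (G : SimpleGraph V) (φ : V → ℕ) (c : ℕ) : Prop :=
  ∀ v : V, {w : V | (G.monoSub φ).Reachable v w}.ncard ≤ c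

/-- Twice the number of edges of `G` inside the vertex set `s`
(the number of ordered adjacent pairs in `s`). -/
noncomputable def SimpleGraph.degPairs {V : Type*} (G : SimpleGraph V) (s : Finset V) : ℕ :=
  {p : V × V | p.1 ∈ s ∧ p.2 ∈ s ∧ G.Adj p.1 p.2}.ncard

theorem stmt0 {V : Type*} [Fintype V] (G : SimpleGraph V) (d : ℕ) (L : V → Finset ℕ)
    (hL : ∀ v : V, {w : V | G.Adj v w}.ncard + 1 ≤ (L v).card * (d + 1)) :
    ∃ φ : V → ℕ, (∀ v, φ v ∈ L v) ∧ G.DefectLe φ d := by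
  classical
  have hncard : ∀ (P : V → Prop), {w | P w}.ncard = (Finset.univ.filter P).card := by
    intro P
    rw [← Set.ncard_coe_finset]
    congr 1
    ext w
    simp
  have hne : ∀ v, (L v).Nonempty := by
    intro v
    have h1 : 1 ≤ (L v).card * (d + 1) := le_trans (Nat.le_add_left 1 _) (hL v)
    rcases Nat.eq_zero_or_pos (L v).card with h | h
    · simp [h] at h1
    · exact Finset.card_pos.mp h
  haveI : ∀ v, Nonempty {c : ℕ // c ∈ L v} := fun v => ⟨⟨(hne v).choose, (hne v).choose_spec⟩⟩
  let C := ∀ v : V, {c : ℕ // c ∈ L v}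
  haveI : Nonempty C := ⟨fun v => Classical.arbitrary _⟩
  haveI : Fintype C := inferInstance
  -- f counts one monochromatic ordered pair
  let f : C → V → V → ℕ := fun ψ u w => if G.Adj u w ∧ (ψ u).1 = (ψ w).1 then 1 else 0
  let M : C → ℕ := fun ψ => ∑ u : V, ∑ w : V, f ψ u w
  obtain ⟨ψ, -, hmin⟩ := Finset.exists_min_image Finset.univ M ⟨Classical.arbitrary C, Finset.mem_univ _⟩
  refine ⟨fun u => (ψ u).1, fun u => (ψ u).2, ?_⟩
  intro v
  simp only [SimpleGraph.DefectLe]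
  by_contra hbad
  push_neg at hbad
  rw [hncard] at hbad
  -- pigeonhole: some colour c ∈ L v has at most d neighbours of v coloured c
  set N : Finset V := Finset.univ.filter (fun w => G.Adj v w) with hN
  set Nc : ℕ → Finset V := fun c => Finset.univ.filter (fun w => G.Adj v w ∧ (ψ w).1 = c) with hNc
  have hNcard : N.card + 1 ≤ (L v).card * (d + 1) := by
    have := hL v
    rwa [hncard] at this
  have hdisj : ∀ c ∈ L v, ∀ c' ∈ L v, c ≠ c' → Disjoint (Nc c) (Nc c') := by
    intro c _ c' _ hcc'
    rw [Finset.disjoint_left]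
    intro w hw hw'
    simp only [hNc, Finset.mem_filter] at hw hw'
    exact hcc' (hw.2.2 ▸ hw'.2.2)
  have hsum : ∑ c ∈ L v, (Nc c).card ≤ N.card := by
    rw [← Finset.card_biUnion hdisj]
    apply Finset.card_le_card
    intro w hw
    simp only [Finset.mem_biUnion, hNc, Finset.mem_filter] at hw
    obtain ⟨c, -, -, hadj, -⟩ := hw
    simp [hN, hadj]
  have hex : ∃ c ∈ L v, (Nc c).card ≤ d := by
    by_contra h
    push_neg at h
    have : (L v).card * (d + 1) ≤ ∑ c ∈ L v, (Nc c).card := by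
      calc (L v).card * (d + 1) = ∑ _c ∈ L v, (d + 1) := by
            rw [Finset.sum_const, smul_eq_mul]
        _ ≤ ∑ c ∈ L v, (Nc c).card := Finset.sum_le_sum (fun c hc => h c hc)
    omega
  obtain ⟨c, hc, hcd⟩ := hex
  set ψ' : C := Function.update ψ v ⟨c, hc⟩ with hψ'
  -- decomposition of M
  have fvv : ∀ ψ₀ : C, f ψ₀ v v = 0 := by
    intro ψ₀
    simp [f, G.loopless.irrefl v]
  have fsymm : ∀ (ψ₀ : C) (u w : V), f ψ₀ u w = f ψ₀ w u := by
    intro ψ₀ u w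
    simp only [f]
    congr 1
    exact propext ⟨fun ⟨h1, h2⟩ => ⟨h1.symm, h2.symm⟩, fun ⟨h1, h2⟩ => ⟨h1.symm, h2.symm⟩⟩
  have key : ∀ ψ₀ : C, M ψ₀ = 2 * (∑ w : V, f ψ₀ v w)
      + ∑ u ∈ Finset.univ.erase v, ∑ w ∈ Finset.univ.erase v, f ψ₀ u w := by
    intro ψ₀
    have h1 : M ψ₀ = (∑ w : V, f ψ₀ v w)
        + ∑ u ∈ Finset.univ.erase v, ∑ w : V, f ψ₀ u w :=
      (Finset.add_sum_erase Finset.univ (fun u => ∑ w : V, f ψ₀ u w) (Finset.mem_univ v)).symm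
    have h2 : ∀ u : V, ∑ w : V, f ψ₀ u w = f ψ₀ u v + ∑ w ∈ Finset.univ.erase v, f ψ₀ u w :=
      fun u => (Finset.add_sum_erase Finset.univ (fun w => f ψ₀ u w) (Finset.mem_univ v)).symm
    have h3 : ∑ u ∈ Finset.univ.erase v, f ψ₀ u v = ∑ w : V, f ψ₀ v w := by
      rw [← Finset.add_sum_erase Finset.univ (fun w => f ψ₀ v w) (Finset.mem_univ v),
        fvv, zero_add]
      exact Finset.sum_congr rfl (fun u _ => fsymm ψ₀ u v)
    calc M ψ₀ = (∑ w : V, f ψ₀ v w)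
          + ∑ u ∈ Finset.univ.erase v, (f ψ₀ u v + ∑ w ∈ Finset.univ.erase v, f ψ₀ u w) := by
          rw [h1]; congr 1; exact Finset.sum_congr rfl (fun u _ => h2 u)
      _ = (∑ w : V, f ψ₀ v w) + ((∑ u ∈ Finset.univ.erase v, f ψ₀ u v)
          + ∑ u ∈ Finset.univ.erase v, ∑ w ∈ Finset.univ.erase v, f ψ₀ u w) := by
          rw [Finset.sum_add_distrib]
      _ = 2 * (∑ w : V, f ψ₀ v w)
          + ∑ u ∈ Finset.univ.erase v, ∑ w ∈ Finset.univ.erase v, f ψ₀ u w := by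
          rw [h3]; ring
  -- the "tail" part is unchanged
  have hT : ∑ u ∈ Finset.univ.erase v, ∑ w ∈ Finset.univ.erase v, f ψ' u w
      = ∑ u ∈ Finset.univ.erase v, ∑ w ∈ Finset.univ.erase v, f ψ u w := by
    apply Finset.sum_congr rfl
    intro u hu
    apply Finset.sum_congr rfl
    intro w hw
    have hu' : u ≠ v := Finset.ne_of_mem_erase hu
    have hw' : w ≠ v := Finset.ne_of_mem_erase hw
    simp only [f, hψ', Function.update_of_ne hu', Function.update_of_ne hw']
  -- the old local count is large
  have ha : d + 1 ≤ ∑ w : V, f ψ v w := by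
    refine Nat.succ_le_of_lt (lt_of_lt_of_le hbad (le_of_eq ?_))
    rw [Finset.card_filter]
    apply Finset.sum_congr rfl
    intro w _
    by_cases h : G.Adj v w ∧ (ψ w).1 = (ψ v).1
    · rw [if_pos h]
      simp only [f]
      rw [if_pos ⟨h.1, h.2.symm⟩]
    · rw [if_neg h]
      simp only [f]
      rw [if_neg (fun hh => h ⟨hh.1, hh.2.symm⟩)]
  -- the new local count is small
  have ha' : ∑ w : V, f ψ' v w ≤ d := by
    have heq : ∑ w : V, f ψ' v w = (Nc c).card := by
      rw [Finset.card_filter]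
      apply Finset.sum_congr rfl
      intro w _
      by_cases hwv : w = v
      · simp [f, hwv, G.loopless]
      · simp only [f, hψ', Function.update_self, Function.update_of_ne hwv]
        congr 1
        exact propext ⟨fun ⟨h1, h2⟩ => ⟨h1, h2.symm⟩, fun ⟨h1, h2⟩ => ⟨h1, h2.symm⟩⟩
    omega
  have hlt : M ψ' < M ψ := by
    rw [key ψ', key ψ, hT]
    omega
  exact absurd (hmin ψ' (Finset.mem_univ _)) (by omega)
end

section
/- For integers d ≥ 0, n₀ ≥ 1 and k ≥ 1, every finite graph G in which every subgraph with at least n₀ vertices has average degree less than (2d+2)/(d+2) · k is k-choosable with defect max{⌈(n₀-1)/k⌉ - 1, d}. -/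
open Finset

attribute [local instance] Classical.propDecidable

namespace HWaux

variable {V : Type*}

/-- Number of `w ∈ A` with `R v w`. -/
noncomputable def cnt (R : V → V → Prop) (A : Finset V) (v : V) : ℕ :=
  (A.filter (fun w => R v w)).card

/-- Sum of `cnt` over `A` (counts ordered related pairs inside `A`). -/
noncomputable def tot (R : V → V → Prop) (A : Finset V) : ℕ :=
  ∑ w ∈ A, cnt R A w

lemma cnt_split {R : V → V → Prop} {A s : Finset V} (h : A ⊆ s) (v : V) :
    cnt R s v = cnt R A v + cnt R (s \ A) v := by
  unfold cnt
  rw [← Finset.card_union_of_disjoint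
      (Finset.disjoint_filter_filter Finset.disjoint_sdiff),
    ← Finset.filter_union, Finset.union_sdiff_of_subset h]

lemma cnt_erase_self {R : V → V → Prop} {v : V} (hirr : ¬ R v v) (A : Finset V) :
    cnt R (A.erase v) v = cnt R A v := by
  unfold cnt
  congr 1
  ext w
  simp only [mem_filter, mem_erase]
  constructor
  · rintro ⟨⟨_, hw⟩, hR⟩; exact ⟨hw, hR⟩
  · rintro ⟨hw, hR⟩
    refine ⟨⟨?_, hw⟩, hR⟩
    rintro rfl; exact hirr hR

lemma tot_erase {R : V → V → Prop} (hsym : ∀ a b, R a b → R b a) (hirr : ∀ a, ¬ R a a)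
    {A : Finset V} {v : V} (hv : v ∈ A) :
    tot R A = tot R (A.erase v) + 2 * cnt R A v := by
  have hvA' : v ∉ A.erase v := notMem_erase _ _
  have hins : insert v (A.erase v) = A := insert_erase hv
  have h1 : tot R A = cnt R A v + ∑ w ∈ A.erase v, cnt R A w := by
    rw [tot, ← hins, sum_insert hvA', hins]
  have h2 : ∀ w ∈ A.erase v, cnt R A w = cnt R (A.erase v) w + (if R w v then 1 else 0) := by
    intro w hw
    have hflt : A.filter (fun u => R w u)
        = (A.erase v).filter (fun u => R w u) ∪ (if R w v then {v} else ∅) := by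
      ext u
      by_cases huv : u = v
      · subst huv
        simp only [mem_filter, mem_union, mem_erase, ne_eq, not_true_eq_false, false_and,
          false_or]
        split <;> simp_all
      · simp only [mem_filter, mem_union, mem_erase, ne_eq, huv, not_false_eq_true, true_and]
        split <;> simp [huv]
    unfold cnt
    rw [hflt]
    split
    · rw [Finset.card_union_of_disjoint]
      · simp
      · simp only [Finset.disjoint_singleton_right, mem_filter]
        intro hc
        exact (notMem_erase v A) hc.1
    · simp
  have h3 : ∑ w ∈ A.erase v, (if R w v then 1 else 0) = cnt R A v := by
    rw [← Finset.card_filter]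
    have : (A.erase v).filter (fun w => R w v) = (A.erase v).filter (fun w => R v w) :=
      Finset.filter_congr (fun w _ => ⟨hsym w v, hsym v w⟩)
    rw [this]
    exact cnt_erase_self (hirr v) A
  have h4 : ∑ w ∈ A.erase v, cnt R A w
      = tot R (A.erase v) + cnt R A v := by
    rw [Finset.sum_congr rfl h2, Finset.sum_add_distrib, h3, tot]
  omega

end HWaux

namespace HWaux

variable {V : Type*}

lemma peel (G : SimpleGraph V) (k D : ℕ) (s : Finset V)
    (H : ∀ B ⊆ s, B.Nonempty →
      ∃ v ∈ B, (D+1)*k + D * cnt G.Adj B v ≤ (D+1) * cnt G.Adj s v) :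
    ∀ A, A ⊆ s →
      2*((D+1)*k*A.card) + D * tot G.Adj A ≤ 2*((D+1) * ∑ v ∈ A, cnt G.Adj s v) := by
  intro A
  induction A using Finset.strongInduction with
  | _ A IH =>
    intro hAs
    rcases A.eq_empty_or_nonempty with rfl | hne
    · simp [tot]
    · obtain ⟨v, hvA, hviol⟩ := H A hAs hne
      have hssub : A.erase v ⊂ A := erase_ssubset hvA
      have IH' := IH _ hssub ((erase_subset _ _).trans hAs)
      have hsplit : tot G.Adj A = tot G.Adj (A.erase v) + 2 * cnt G.Adj A v :=
        tot_erase (fun a b h => h.symm) (fun a => G.irrefl) hvA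
      have hsum : ∑ w ∈ A, cnt G.Adj s w
          = cnt G.Adj s v + ∑ w ∈ A.erase v, cnt G.Adj s w := by
        rw [← insert_erase hvA, sum_insert (notMem_erase _ _), insert_erase hvA]
      have hcard : A.card = (A.erase v).card + 1 := by
        rw [card_erase_of_mem hvA]
        have : 0 < A.card := card_pos.mpr hne
        omega
      rw [hsplit, hsum, hcard]
      have e1 : 2*((D+1)*k*((A.erase v).card+1)) + D*(tot G.Adj (A.erase v) + 2*cnt G.Adj A v)
          = (2*((D+1)*k*(A.erase v).card) + D*tot G.Adj (A.erase v))
            + 2*((D+1)*k + D*cnt G.Adj A v) := by ring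
      have e2 : 2*((D+1) * (cnt G.Adj s v + ∑ w ∈ A.erase v, cnt G.Adj s w))
          = 2*((D+1) * ∑ w ∈ A.erase v, cnt G.Adj s w) + 2*((D+1)*cnt G.Adj s v) := by ring
      rw [e1, e2]
      exact Nat.add_le_add IH' (Nat.mul_le_mul_left 2 hviol)

/-- The "same-colour neighbour" relation. -/
def Rc (G : SimpleGraph V) (φ : V → ℕ) : V → V → Prop :=
  fun a b => G.Adj a b ∧ φ b = φ a

lemma Rc_symm (G : SimpleGraph V) (φ : V → ℕ) : ∀ a b, Rc G φ a b → Rc G φ b a :=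
  fun _ _ h => ⟨h.1.symm, h.2.symm⟩

lemma Rc_irrefl (G : SimpleGraph V) (φ : V → ℕ) : ∀ a, ¬ Rc G φ a a :=
  fun a h => G.irrefl h.1

/-- Existence of a list colouring of `A` minimising monochromatic edges,
with prescribed values outside `A`. -/
lemma exists_min (G : SimpleGraph V) (A : Finset V) (M : V → Finset ℕ)
    (hM : ∀ v ∈ A, (M v).Nonempty) (g : V → ℕ) :
    ∃ φ : V → ℕ, (∀ v ∈ A, φ v ∈ M v) ∧ (∀ v ∉ A, φ v = g v) ∧
      ∀ v ∈ A, ∀ c ∈ M v,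
        cnt (Rc G φ) A v ≤ (A.filter (fun w => G.Adj v w ∧ φ w = c)).card := by
  classical
  set Good : (V → ℕ) → Prop :=
    fun φ => (∀ v ∈ A, φ v ∈ M v) ∧ (∀ v ∉ A, φ v = g v) with hGood
  set S : Set ℕ := {n | ∃ φ, Good φ ∧ tot (Rc G φ) A = n} with hS
  have hSne : S.Nonempty := by
    refine ⟨_, fun v => if h : v ∈ A then (M v).min' (hM v h) else g v, ⟨?_, ?_⟩, rfl⟩
    · intro v hv; simp only [dif_pos hv]; exact (M v).min'_mem _
    · intro v hv; simp only [dif_neg hv]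
  obtain ⟨φ, hφGood, hφtot⟩ := Nat.sInf_mem hSne
  refine ⟨φ, hφGood.1, hφGood.2, ?_⟩
  intro v hv c hc
  set φ' := Function.update φ v c with hφ'
  have hφ'v : φ' v = c := Function.update_self v c φ
  have hφ'w : ∀ w, w ≠ v → φ' w = φ w := fun w hw => Function.update_of_ne hw c φ
  have hGood' : Good φ' := by
    constructor
    · intro w hw
      by_cases hwv : w = v
      · subst hwv; rw [hφ'v]; exact hc
      · rw [hφ'w w hwv]; exact hφGood.1 w hw
    · intro w hw
      have hwv : w ≠ v := fun h => hw (h ▸ hv)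
      rw [hφ'w w hwv]; exact hφGood.2 w hw
  have hmin : sInf S ≤ tot (Rc G φ') A := Nat.sInf_le ⟨φ', hGood', rfl⟩
  have e1 : tot (Rc G φ) A = tot (Rc G φ) (A.erase v) + 2 * cnt (Rc G φ) A v :=
    tot_erase (Rc_symm G φ) (Rc_irrefl G φ) hv
  have e2 : tot (Rc G φ') A = tot (Rc G φ') (A.erase v) + 2 * cnt (Rc G φ') A v :=
    tot_erase (Rc_symm G φ') (Rc_irrefl G φ') hv
  have e3 : tot (Rc G φ') (A.erase v) = tot (Rc G φ) (A.erase v) := by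
    unfold tot
    refine Finset.sum_congr rfl (fun w hw => ?_)
    unfold cnt
    congr 1
    refine Finset.filter_congr (fun u hu => ?_)
    unfold Rc
    rw [hφ'w w (ne_of_mem_erase hw), hφ'w u (ne_of_mem_erase hu)]
  have e4 : cnt (Rc G φ') A v = (A.filter (fun w => G.Adj v w ∧ φ w = c)).card := by
    unfold cnt
    congr 1
    refine Finset.filter_congr (fun u hu => ?_)
    unfold Rc
    by_cases huv : u = v
    · subst huv
      simp [G.irrefl]
    · rw [hφ'w u huv, hφ'v]
  have e5 : cnt (Rc G φ) A v = (A.filter (fun w => G.Adj v w ∧ φ w = φ v)).card := by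
    unfold cnt
    congr 1
    exact Finset.filter_congr (fun u hu => Iff.rfl)
  rw [hφtot] at e1
  omega

/-- Colour classes partition the neighbourhood. -/
lemma sum_cnt_le (G : SimpleGraph V) (φ : V → ℕ) (A : Finset V) (v : V) (T : Finset ℕ) :
    ∑ c ∈ T, (A.filter (fun w => G.Adj v w ∧ φ w = c)).card ≤ cnt G.Adj A v := by
  classical
  set X := A.filter (fun w => G.Adj v w ∧ φ w ∈ T) with hX
  have h1 : ∀ x ∈ X, φ x ∈ T := fun x hx => (mem_filter.mp hx).2.2
  have h2 := Finset.card_eq_sum_card_fiberwise h1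
  have h3 : ∀ c ∈ T, X.filter (fun w => φ w = c)
      = A.filter (fun w => G.Adj v w ∧ φ w = c) := by
    intro c hc
    ext w
    simp only [hX, mem_filter, and_assoc]
    constructor
    · rintro ⟨hw, hadj, _, hc'⟩; exact ⟨hw, hadj, hc'⟩
    · rintro ⟨hw, hadj, hc'⟩; exact ⟨hw, hadj, hc' ▸ hc, hc'⟩
  calc ∑ c ∈ T, (A.filter (fun w => G.Adj v w ∧ φ w = c)).card
      = ∑ c ∈ T, (X.filter (fun w => φ w = c)).card :=
        (Finset.sum_congr rfl (fun c hc => by rw [h3 c hc])).symm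
    _ = X.card := h2.symm
    _ ≤ cnt G.Adj A v := by
        refine Finset.card_le_card ?_
        intro w hw
        simp only [hX, mem_filter] at hw ⊢
        exact ⟨hw.1, hw.2.1⟩

lemma cnt_adj_lt_card (G : SimpleGraph V) {s : Finset V} {v : V} (hv : v ∈ s) :
    cnt G.Adj s v + 1 ≤ s.card := by
  have hsub : s.filter (fun w => G.Adj v w) ⊆ s.erase v := by
    intro w hw
    rw [mem_filter] at hw
    exact mem_erase.mpr ⟨hw.2.ne', hw.1⟩
  have := Finset.card_le_card hsub
  rw [card_erase_of_mem hv] at this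
  have hpos : 0 < s.card := card_pos.mpr ⟨v, hv⟩
  unfold cnt
  omega

lemma degPairs_eq {V : Type*} [Fintype V] (G : SimpleGraph V) (s : Finset V) :
    G.degPairs s = tot G.Adj s := by
  classical
  have h0 : {p : V × V | p.1 ∈ s ∧ p.2 ∈ s ∧ G.Adj p.1 p.2}
      = ↑((s ×ˢ s).filter (fun p => G.Adj p.1 p.2)) := by
    ext ⟨a, b⟩
    simp only [Set.mem_setOf_eq, Finset.coe_filter, Finset.mem_product, Set.mem_setOf_eq]
    tauto
  rw [SimpleGraph.degPairs, h0, Set.ncard_coe_finset]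
  have h1 : ∀ p ∈ (s ×ˢ s).filter (fun p => G.Adj p.1 p.2), p.1 ∈ s := by
    intro p hp
    exact (Finset.mem_product.mp (Finset.mem_filter.mp hp).1).1
  rw [Finset.card_eq_sum_card_fiberwise h1]
  refine Finset.sum_congr rfl (fun v hv => ?_)
  refine Finset.card_bij (fun p _ => p.2) ?_ ?_ ?_
  · intro p hp
    simp only [mem_filter, Finset.mem_product] at hp
    rw [mem_filter]
    exact ⟨hp.1.1.2, hp.2 ▸ hp.1.2⟩
  · intro p hp q hq hpq
    simp only [mem_filter] at hp hq
    exact Prod.ext (hp.2.trans hq.2.symm) hpq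
  · intro w hw
    rw [mem_filter] at hw
    refine ⟨(v, w), ?_, rfl⟩
    exact mem_filter.mpr ⟨mem_filter.mpr ⟨Finset.mem_product.mpr ⟨hv, hw.1⟩, hw.2⟩, rfl⟩

end HWaux
namespace HWaux

lemma cnt_Rc {V : Type*} (G : SimpleGraph V) (φ : V → ℕ) (A : Finset V) (v : V) :
    cnt (Rc G φ) A v = (A.filter (fun w => G.Adj v w ∧ φ w = φ v)).card := by
  unfold cnt
  congr 1
  exact Finset.filter_congr (fun _ _ => Iff.rfl)

lemma cnt_adj_eq {V : Type*} (G : SimpleGraph V) (A : Finset V) (v : V) :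
    cnt G.Adj A v = (A.filter (fun w => G.Adj v w)).card := rfl

end HWaux

theorem stmt4 {V : Type*} [Fintype V] (G : SimpleGraph V) (k d n₀ : ℕ)
    (hk : 1 ≤ k) (hn : 1 ≤ n₀)
    (hmad : ∀ s : Finset V, n₀ ≤ s.card →
      (G.degPairs s : ℚ) < (2 * d + 2) / (d + 2) * k * s.card)
    (L : V → Finset ℕ) (hL : ∀ v, k ≤ (L v).card) :
    ∃ φ : V → ℕ, (∀ v, φ v ∈ L v) ∧
      G.DefectLe φ (max ((⌈((n₀ : ℚ) - 1) / k⌉).toNat - 1) d) := by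
  classical
  set D : ℕ := max ((⌈((n₀ : ℚ) - 1) / k⌉).toNat - 1) d with hD
  have hLne : ∀ v, (L v).Nonempty := by
    intro v
    rw [← Finset.card_pos]
    have := hL v
    omega
  have key : ∀ s : Finset V, ∃ φ : V → ℕ, (∀ v, φ v ∈ L v) ∧
      ∀ v ∈ s, (s.filter (fun w => G.Adj v w ∧ φ w = φ v)).card ≤ D := by
    intro s
    induction s using Finset.strongInduction with
    | _ s IH =>
      by_cases hsmall : s.card < n₀
      · -- small case: min-mono colouring has small defect
        obtain ⟨φ, hφ1, hφ2, hmin⟩ :=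
          HWaux.exists_min G s L (fun v _ => hLne v) (fun v => (L v).min' (hLne v))
        refine ⟨φ, ?_, ?_⟩
        · intro v
          by_cases hv : v ∈ s
          · exact hφ1 v hv
          · rw [hφ2 v hv]; exact (L v).min'_mem _
        · intro v hv
          set q := (s.filter (fun w => G.Adj v w ∧ φ w = φ v)).card with hq
          have hlow : (L v).card * q ≤ ∑ c ∈ L v,
              (s.filter (fun w => G.Adj v w ∧ φ w = c)).card := by
            rw [← smul_eq_mul]
            refine Finset.card_nsmul_le_sum _ _ _ (fun c hc => ?_)
            have := hmin v hv c hc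
            rwa [HWaux.cnt_Rc] at this
          have hsum := HWaux.sum_cnt_le G φ s v (L v)
          have hdeg := HWaux.cnt_adj_lt_card G hv
          have hkq : k * q ≤ (L v).card * q := Nat.mul_le_mul_right q (hL v)
          have hfin : k * q + 2 ≤ n₀ := by
            have h1 : k * q ≤ HWaux.cnt G.Adj s v := le_trans hkq (le_trans hlow hsum)
            omega
          -- ceiling arithmetic
          have hkpos : (0:ℚ) < (k:ℚ) := by
            have : (1:ℚ) ≤ (k:ℚ) := by exact_mod_cast hk
            linarith
          have hq2 : (q:ℚ) < ((n₀ : ℚ) - 1) / k := by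
            rw [lt_div_iff₀ hkpos]
            have hcast : (k:ℚ) * (q:ℚ) + 2 ≤ (n₀:ℚ) := by exact_mod_cast hfin
            nlinarith
          have hceil : (q:ℤ) < ⌈((n₀ : ℚ) - 1) / k⌉ := by
            rw [Int.lt_ceil]
            exact_mod_cast hq2
          have hDceil : q ≤ (⌈((n₀ : ℚ) - 1) / k⌉).toNat - 1 := by
            omega
          rw [hD]
          exact le_trans hDceil (le_max_left _ _)
      · -- big case
        have hbig : n₀ ≤ s.card := not_lt.mp hsmall
        -- island existence
        have hisl : ∃ A, A ⊆ s ∧ A.Nonempty ∧ ∀ v ∈ A,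
            HWaux.cnt G.Adj A v + (D+1) * HWaux.cnt G.Adj (s \ A) v + 1 ≤ (D+1)*k := by
          by_contra hno
          push_neg at hno
          have H : ∀ B ⊆ s, B.Nonempty →
              ∃ v ∈ B, (D+1)*k + D * HWaux.cnt G.Adj B v
                ≤ (D+1) * HWaux.cnt G.Adj s v := by
            intro B hBs hBne
            obtain ⟨v, hvB, hv⟩ := hno B hBs hBne
            refine ⟨v, hvB, ?_⟩
            have hsplit : HWaux.cnt G.Adj s v
                = HWaux.cnt G.Adj B v + HWaux.cnt G.Adj (s \ B) v := HWaux.cnt_split hBs v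
            have hv' : (D+1)*k ≤ HWaux.cnt G.Adj B v + (D+1) * HWaux.cnt G.Adj (s \ B) v :=
              Nat.lt_add_one_iff.mp hv
            rw [hsplit, Nat.mul_add]
            have e : (D+1) * HWaux.cnt G.Adj B v
                = D * HWaux.cnt G.Adj B v + HWaux.cnt G.Adj B v := by ring
            linarith
          have hpeel := HWaux.peel G k D s H s (subset_refl s)
          have hts : ∑ v ∈ s, HWaux.cnt G.Adj s v = HWaux.tot G.Adj s := rfl
          rw [hts] at hpeel
          have hE : 2*((D+1)*k*s.card) ≤ (D+2) * HWaux.tot G.Adj s := by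
            have e : 2*((D+1) * HWaux.tot G.Adj s)
                = D * HWaux.tot G.Adj s + (D+2) * HWaux.tot G.Adj s := by ring
            linarith
          have hmad' := hmad s hbig
          rw [HWaux.degPairs_eq] at hmad'
          have hdDn : d ≤ D := by rw [hD]; exact le_max_right _ _
          have hdD : (d:ℚ) ≤ (D:ℚ) := by exact_mod_cast hdDn
          have hmono : ((2:ℚ) * d + 2) / ((d:ℚ) + 2) ≤ ((2:ℚ) * D + 2) / ((D:ℚ) + 2) := by
            rw [div_le_div_iff₀ (by positivity) (by positivity)]
            nlinarith
          have hmad'' : (HWaux.tot G.Adj s : ℚ) < ((2:ℚ) * D + 2) / ((D:ℚ) + 2) * k * s.card := by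
            refine lt_of_lt_of_le hmad' ?_
            have h0 : (0:ℚ) ≤ (k:ℚ) * s.card := by positivity
            calc ((2:ℚ) * d + 2) / ((d:ℚ) + 2) * k * s.card
                = ((2:ℚ) * d + 2) / ((d:ℚ) + 2) * ((k:ℚ) * s.card) := by ring
              _ ≤ ((2:ℚ) * D + 2) / ((D:ℚ) + 2) * ((k:ℚ) * s.card) :=
                  mul_le_mul_of_nonneg_right hmono h0
              _ = ((2:ℚ) * D + 2) / ((D:ℚ) + 2) * k * s.card := by ring
          have hDpos : (0:ℚ) < (D:ℚ) + 2 := by positivity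
          have h1 : ((D:ℚ)+2) * (HWaux.tot G.Adj s : ℚ)
              < ((D:ℚ)+2) * (((2:ℚ) * D + 2) / ((D:ℚ) + 2) * k * s.card) :=
            mul_lt_mul_of_pos_left hmad'' hDpos
          have h2 : ((D:ℚ)+2) * (((2:ℚ) * D + 2) / ((D:ℚ) + 2) * k * s.card)
              = 2*(((D:ℚ)+1)*k*s.card) := by
            field_simp
          have h3 : (2:ℚ)*(((D:ℚ)+1)*(k:ℚ)*(s.card:ℚ)) ≤ ((D:ℚ)+2) * (HWaux.tot G.Adj s : ℚ) := by
            exact_mod_cast hE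
          rw [h2] at h1
          linarith
        obtain ⟨A, hAs, hAne, hIsl⟩ := hisl
        have hss : s \ A ⊂ s := Finset.sdiff_ssubset hAs hAne
        obtain ⟨φ₀, hφ₀L, hφ₀def⟩ := IH _ hss
        set s' := s \ A with hs'
        set M : V → Finset ℕ :=
          fun v => (L v) \ ((s'.filter (fun w => G.Adj v w)).image φ₀) with hM
        have hMsub : ∀ v, M v ⊆ L v := fun v => Finset.sdiff_subset
        have hMk : ∀ v, k ≤ (M v).card + HWaux.cnt G.Adj s' v := by
          intro v
          have h1 : (L v).card ≤ (M v).card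
              + ((s'.filter (fun w => G.Adj v w)).image φ₀).card :=
            Finset.card_le_card_sdiff_add_card
          have h2 : ((s'.filter (fun w => G.Adj v w)).image φ₀).card
              ≤ (s'.filter (fun w => G.Adj v w)).card := Finset.card_image_le
          have h3 := hL v
          rw [HWaux.cnt_adj_eq]
          omega
        have hMne : ∀ v ∈ A, (M v).Nonempty := by
          intro v hv
          rw [← Finset.card_pos]
          have hI := hIsl v hv
          have ho : HWaux.cnt G.Adj s' v < k := by
            by_contra hcon
            push_neg at hcon
            have : (D+1)*k ≤ (D+1) * HWaux.cnt G.Adj s' v := Nat.mul_le_mul_left _ hcon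
            have h0 : 0 ≤ HWaux.cnt G.Adj A v := Nat.zero_le _
            linarith
          have := hMk v
          omega
        obtain ⟨ψ, hψM, hψout, hψmin⟩ := HWaux.exists_min G A M hMne φ₀
        refine ⟨ψ, ?_, ?_⟩
        · intro v
          by_cases hv : v ∈ A
          · exact hMsub v (hψM v hv)
          · rw [hψout v hv]; exact hφ₀L v
        · intro v hv
          have hsplit : (s.filter (fun w => G.Adj v w ∧ ψ w = ψ v)).card
              = (A.filter (fun w => G.Adj v w ∧ ψ w = ψ v)).card
                + (s'.filter (fun w => G.Adj v w ∧ ψ w = ψ v)).card := by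
            have := HWaux.cnt_split (R := HWaux.Rc G ψ) hAs v
            rwa [HWaux.cnt_Rc, HWaux.cnt_Rc, HWaux.cnt_Rc] at this
          by_cases hvA : v ∈ A
          · -- v in the island
            have hzero : (s'.filter (fun w => G.Adj v w ∧ ψ w = ψ v)).card = 0 := by
              rw [Finset.card_eq_zero, Finset.filter_eq_empty_iff]
              intro w hw
              rintro ⟨hadj, heq⟩
              have hwA : w ∉ A := (Finset.mem_sdiff.mp hw).2
              have hψw : ψ w = φ₀ w := hψout w hwA
              have hmem : φ₀ w ∈ (s'.filter (fun u => G.Adj v u)).image φ₀ :=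
                Finset.mem_image_of_mem _ (Finset.mem_filter.mpr ⟨hw, hadj⟩)
              have hnotin : ψ v ∉ (s'.filter (fun u => G.Adj v u)).image φ₀ :=
                (Finset.mem_sdiff.mp (hψM v hvA)).2
              apply hnotin
              rw [← heq, hψw]
              exact hmem
            have hqD : (A.filter (fun w => G.Adj v w ∧ ψ w = ψ v)).card ≤ D := by
              by_contra hcon
              push_neg at hcon
              set q := (A.filter (fun w => G.Adj v w ∧ ψ w = ψ v)).card with hqdef
              have hlow : (M v).card * q ≤ ∑ c ∈ M v,
                  (A.filter (fun w => G.Adj v w ∧ ψ w = c)).card := by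
                rw [← smul_eq_mul]
                refine Finset.card_nsmul_le_sum _ _ _ (fun c hc => ?_)
                have := hψmin v hvA c hc
                rwa [HWaux.cnt_Rc] at this
              have hsum := HWaux.sum_cnt_le G ψ A v (M v)
              have hI := hIsl v hvA
              have hk' := hMk v
              have m1 : (M v).card * (D+1) ≤ (M v).card * q :=
                Nat.mul_le_mul_left _ hcon
              have m2 : (D+1)*k ≤ (D+1)*((M v).card + HWaux.cnt G.Adj s' v) :=
                Nat.mul_le_mul_left _ hk'
              have e : (D+1)*((M v).card + HWaux.cnt G.Adj s' v)
                  = (M v).card*(D+1) + (D+1)*HWaux.cnt G.Adj s' v := by ring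
              linarith
            omega
          · -- v outside the island
            have hvs' : v ∈ s' := Finset.mem_sdiff.mpr ⟨hv, hvA⟩
            have hψv : ψ v = φ₀ v := hψout v hvA
            have hzero : (A.filter (fun w => G.Adj v w ∧ ψ w = ψ v)).card = 0 := by
              rw [Finset.card_eq_zero, Finset.filter_eq_empty_iff]
              intro w hwA
              rintro ⟨hadj, heq⟩
              have hmem : φ₀ v ∈ (s'.filter (fun u => G.Adj w u)).image φ₀ :=
                Finset.mem_image_of_mem _ (Finset.mem_filter.mpr ⟨hvs', hadj.symm⟩)
              have hnotin : ψ w ∉ (s'.filter (fun u => G.Adj w u)).image φ₀ :=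
                (Finset.mem_sdiff.mp (hψM w hwA)).2
              apply hnotin
              rw [heq, hψv]
              exact hmem
            have hind : (s'.filter (fun w => G.Adj v w ∧ ψ w = ψ v)).card ≤ D := by
              have heqf : s'.filter (fun w => G.Adj v w ∧ ψ w = ψ v)
                  = s'.filter (fun w => G.Adj v w ∧ φ₀ w = φ₀ v) := by
                refine Finset.filter_congr (fun w hw => ?_)
                rw [hψout w (Finset.mem_sdiff.mp hw).2, hψv]
              rw [heqf]
              exact hφ₀def v hvs'
            omega
  obtain ⟨φ, hφL, hφdef⟩ := key Finset.univ
  refine ⟨φ, hφL, ?_⟩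
  intro v
  have hset : {w | G.Adj v w ∧ φ w = φ v}
      = ↑(Finset.univ.filter (fun w => G.Adj v w ∧ φ w = φ v)) := by
    ext w
    simp
  rw [hset, Set.ncard_coe_finset]
  exact hφdef v (Finset.mem_univ v)
end
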